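/- Let F be a field, q ∈ F, and s, t ≥ 1 natural numbers with q + 1 ≠ 0 and (q+1)²(s−1)(t−1) ≠ s·t in F. Then the q-distance matrix D of K_{s,t} is invertible, and its inverse is given entrywise by D⁻¹(u,v) = c(u,v)/((q+1)((q+1)²(s−1)(t−1) − st)) − (1/(q+1) if u = v else 0), where c(u,v) = (q+1)²(t−1) − t if u, v both lie in the X-part, c(u,v) = −(q+1) if u and v lie in different parts, and c(u,v) = (q+1)²(s−1) − s if u, v both lie in the Y-part. -/

import Mathlib

def qDistKst (F : Type*) [Field F] (q : F) (s t : ℕ) :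
    Matrix (Fin s ⊕ Fin t) (Fin s ⊕ Fin t) F :=
  Matrix.of fun u v =>
    if u = v then 0 else if u.isLeft = v.isLeft then q + 1 else 1

def cEntryKst (F : Type*) [Field F] (q : F) (s t : ℕ) :
    Fin s ⊕ Fin t → Fin s ⊕ Fin t → F := fun u v =>
  match u, v with
  | Sum.inl _, Sum.inl _ => (q + 1) ^ 2 * ((t : F) - 1) - (t : F)
  | Sum.inr _, Sum.inr _ => (q + 1) ^ 2 * ((s : F) - 1) - (s : F)
  | _, _ => -(q + 1)

lemma auxSumKst {F : Type*} [Field F] {n : ℕ} (i j : Fin n) (a c w : F) :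
    ∑ x : Fin n, (if i = x then 0 else a) * (c - if x = j then w else 0)
      = ((n : F) - 1) * (a * c) - (if i = j then 0 else a * w) := by
  rcases eq_or_ne i j with rfl | h
  · have h1 : ∀ x : Fin n, (if i = x then 0 else a) * (c - if x = i then w else 0)
        = a * c - (if i = x then a * c else 0) := by
      intro x
      rcases eq_or_ne i x with rfl | hx
      · simp
      · simp [hx, Ne.symm hx]
    simp only [h1, Finset.sum_sub_distrib, Finset.sum_const, Finset.card_univ,
      Fintype.card_fin, smul_eq_mul, Finset.sum_ite_eq, Finset.mem_univ, if_true]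
    ring
  · have h1 : ∀ x : Fin n, (if i = x then 0 else a) * (c - if x = j then w else 0)
        = a * c - (if i = x then a * c else 0) - (if x = j then a * w else 0) := by
      intro x
      rcases eq_or_ne i x with rfl | hx
      · have : ¬ (i = j) := h
        simp [this]
      · rcases eq_or_ne x j with rfl | hj
        · simp [hx]; ring
        · simp [hx, hj]
    simp only [h1, Finset.sum_sub_distrib, Finset.sum_const, Finset.card_univ,
      Fintype.card_fin, smul_eq_mul, Finset.sum_ite_eq, Finset.sum_ite_eq',
      Finset.mem_univ, if_true, h, if_false]
    ring

lemma auxSumKst2 {F : Type*} [Field F] {n : ℕ} (i : Fin n) (a c : F) :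
    ∑ x : Fin n, (if i = x then 0 else a) * c = ((n : F) - 1) * (a * c) := by
  have h1 : ∀ x : Fin n, (if i = x then 0 else a) * c
      = a * c - (if i = x then a * c else 0) := by
    intro x; split_ifs <;> ring
  simp only [h1, Finset.sum_sub_distrib, Finset.sum_const, Finset.card_univ,
    Fintype.card_fin, smul_eq_mul, Finset.sum_ite_eq, Finset.mem_univ, if_true]
  ring

lemma auxSumKst3 {F : Type*} [Field F] {n : ℕ} (j : Fin n) (c w : F) :
    ∑ x : Fin n, 1 * (c - if x = j then w else 0) = (n : F) * c - w := by
  simp only [one_mul, Finset.sum_sub_distrib, Finset.sum_const, Finset.card_univ,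
    Fintype.card_fin, smul_eq_mul, Finset.sum_ite_eq', Finset.mem_univ, if_true]
  ring

theorem inv_qDist_completeBipartite (F : Type*) [Field F] (q : F)
    (s t : ℕ) (hs : 1 ≤ s) (ht : 1 ≤ t) (hq : q + 1 ≠ 0)
    (hst : (q + 1) ^ 2 * ((s : F) - 1) * ((t : F) - 1) ≠ (s : F) * (t : F)) :
    IsUnit (qDistKst F q s t).det ∧
      ∀ u v, (qDistKst F q s t)⁻¹ u v =
        cEntryKst F q s t u v /
          ((q + 1) * ((q + 1) ^ 2 * ((s : F) - 1) * ((t : F) - 1) - (s : F) * (t : F)))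
          - (if u = v then 1 / (q + 1) else 0) := by
  set k : F := (q + 1) * ((q + 1) ^ 2 * ((s : F) - 1) * ((t : F) - 1) - (s : F) * (t : F)) with hk
  have hk0 : k ≠ 0 := mul_ne_zero hq (sub_ne_zero.mpr hst)
  set B : Matrix (Fin s ⊕ Fin t) (Fin s ⊕ Fin t) F :=
    Matrix.of fun u v => cEntryKst F q s t u v / k - (if u = v then 1 / (q + 1) else 0) with hB
  have hDB : qDistKst F q s t * B = 1 := by
    ext u v
    rw [Matrix.mul_apply, Matrix.one_apply]
    rcases u with i | i <;> rcases v with j | j <;>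
      simp only [Fintype.sum_sum_type, qDistKst, cEntryKst, hB, Matrix.of_apply,
        Sum.inl.injEq, Sum.inr.injEq, Sum.isLeft_inl, Sum.isLeft_inr, reduceIte, reduceCtorEq]
    · rw [auxSumKst]
      simp only [Finset.sum_const, Finset.card_univ, Fintype.card_fin, smul_eq_mul,
        one_mul, sub_zero, nsmul_eq_mul]
      rcases eq_or_ne i j with rfl | hij
      · simp only [if_true]
        field_simp
        rw [hk]; ring
      · simp only [hij, if_false, Sum.inl.injEq]
        field_simp
        rw [hk]; ring
    · rw [auxSumKst2, auxSumKst3, sub_zero]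
      field_simp
      rw [hk]; ring
    · rw [auxSumKst2, auxSumKst3, sub_zero]
      field_simp
      rw [hk]; ring
    · rw [auxSumKst]
      simp only [Finset.sum_const, Finset.card_univ, Fintype.card_fin, smul_eq_mul,
        one_mul, sub_zero, nsmul_eq_mul]
      rcases eq_or_ne i j with rfl | hij
      · simp only [if_true]
        field_simp
        rw [hk]; ring
      · simp only [hij, if_false, Sum.inr.injEq]
        field_simp
        rw [hk]; ring
  exact ⟨Matrix.isUnit_det_of_right_inverse hDB,
    fun u v => by rw [Matrix.inv_eq_right_inv hDB]; rfl⟩
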